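/- As formal power series in ℤ⟦q⟧, Σ_{n≥0} p(n) q^n ≡ f(q) (mod 4), i.e. every coefficient of the partition generating function is congruent modulo 4 to the corresponding coefficient of Ramanujan's third order mock theta function f(q). -/

import Mathlib

/-!
STATEMENT 2: As formal power series in ℤ⟦q⟧,  Σ_{n≥0} p(n) qⁿ ≡ f(q) (mod 4), where
f(q) = 1 + Σ_{k≥1} q^{k²} ∏_{j=1}^{k} (1+q^j)^{-2} is Ramanujan's third order mock
theta function.
-/

open PowerSeries Finset

namespace MockAux

/-- The geometric series `Σ_m q^{jm} = (1-q^j)⁻¹`. -/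
noncomputable def G (j : ℕ) : PowerSeries ℤ := PowerSeries.mk fun m => if j ∣ m then 1 else 0

lemma coeff_G (j m : ℕ) : coeff (R := ℤ) m (G j) = if j ∣ m then 1 else 0 := coeff_mk _ _

lemma one_sub_mul_G {j : ℕ} (hj : 1 ≤ j) : (1 - X ^ j) * G j = 1 := by
  have hj0 : j ≠ 0 := by omega
  ext m
  rw [sub_mul, one_mul, map_sub, coeff_X_pow_mul']
  simp only [coeff_G, coeff_one]
  rcases m with _ | m
  · simp [Nat.le_zero, hj0]
  · simp only [Nat.succ_ne_zero, if_false]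
    by_cases hle : j ≤ m + 1
    · have hiff : j ∣ m + 1 ↔ j ∣ m + 1 - j := ⟨fun h => Nat.dvd_sub h dvd_rfl,
        fun h => by
          have h2 := Nat.sub_add_cancel hle
          exact h2 ▸ Nat.dvd_add h dvd_rfl⟩
      rw [if_pos hle]
      by_cases hd : j ∣ m + 1
      · rw [if_pos hd, if_pos (hiff.mp hd)]; ring
      · rw [if_neg hd, if_neg (fun h => hd (hiff.mpr h))]; ring
    · rw [if_neg hle, if_neg (fun h => hle (Nat.le_of_dvd (Nat.succ_pos m) h)), sub_zero]

/-- partitions of `u` with all parts `≤ k` -/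
def Nkf (k u : ℕ) : Finset (Nat.Partition u) := univ.filter (fun p => ∀ a ∈ p.parts, a ≤ k)
/-- partitions of `u` with at most `k` parts -/
def Mkf (k u : ℕ) : Finset (Nat.Partition u) := univ.filter (fun p => p.parts.card ≤ k)


/-- the multiset with `l j / j` copies of each `j ∈ [1,k]` -/
def mult (k : ℕ) (l : ℕ →₀ ℕ) : Multiset ℕ :=
  (Icc 1 k).val.bind fun j => Multiset.replicate (l j / j) j

lemma count_mult (k : ℕ) (l : ℕ →₀ ℕ) (a : ℕ) :
    Multiset.count a (mult k l) = if a ∈ Icc 1 k then l a / a else 0 := by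
  rw [mult, Multiset.count_bind]
  have key : ∀ j : ℕ, Multiset.count a (Multiset.replicate (l j / j) j)
      = if j = a then l j / j else 0 := fun j => Multiset.count_replicate ..
  calc ((Icc 1 k).val.map fun j => Multiset.count a (Multiset.replicate (l j / j) j)).sum
      = ∑ j ∈ Icc 1 k, if j = a then l j / j else 0 := by
        rw [Finset.sum]
        exact congrArg Multiset.sum (Multiset.map_congr rfl fun j _ => key j)
    _ = if a ∈ Icc 1 k then l a / a else 0 := Finset.sum_ite_eq' (Icc 1 k) a fun j => l j / j

lemma mem_mult {k : ℕ} {l : ℕ →₀ ℕ} {a : ℕ} (h : a ∈ mult k l) : a ∈ Icc 1 k := by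
  rw [mult, Multiset.mem_bind] at h
  obtain ⟨j, hj, hmem⟩ := h
  rwa [Multiset.eq_of_mem_replicate hmem]

lemma sum_mult (k : ℕ) (l : ℕ →₀ ℕ) (hd : ∀ j ∈ Icc 1 k, j ∣ l j) :
    (mult k l).sum = ∑ j ∈ Icc 1 k, l j := by
  rw [mult, Multiset.sum_bind, Finset.sum]
  apply congrArg Multiset.sum
  apply Multiset.map_congr rfl
  intro j hj
  rw [Multiset.sum_replicate, smul_eq_mul, Nat.div_mul_cancel (hd j hj)]

lemma parts_sum_eq {u k : ℕ} (p : Nat.Partition u) (hp : ∀ a ∈ p.parts, a ≤ k) :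
    ∑ j ∈ Icc 1 k, j * Multiset.count j p.parts = u := by
  have hsub : p.parts.toFinset ⊆ Icc 1 k := fun a ha => by
    rw [Multiset.mem_toFinset] at ha
    exact mem_Icc.mpr ⟨p.parts_pos ha, hp a ha⟩
  calc ∑ j ∈ Icc 1 k, j * Multiset.count j p.parts
      = ∑ j ∈ p.parts.toFinset, j * Multiset.count j p.parts := by
        refine (Finset.sum_subset hsub fun x _ hx => ?_).symm
        rw [Multiset.mem_toFinset] at hx
        rw [Multiset.count_eq_zero_of_notMem hx, mul_zero]
    _ = ∑ j ∈ p.parts.toFinset, Multiset.count j p.parts • id j := by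
        refine Finset.sum_congr rfl fun j _ => ?_
        rw [smul_eq_mul, mul_comm]; rfl
    _ = (p.parts.map id).sum := (Finset.sum_multiset_map_count p.parts id).symm
    _ = u := by rw [Multiset.map_id, p.parts_sum]

lemma coeff_prod_G (k u : ℕ) : coeff (R := ℤ) u (∏ j ∈ Icc 1 k, G j) = ((Nkf k u).card : ℤ) := by
  rw [coeff_prod]
  simp only [coeff_G, Finset.prod_boole]
  rw [Finset.sum_boole]
  refine congrArg Nat.cast ?_
  refine Finset.card_bij'
    (i := fun l hl => Nat.Partition.mk (mult k l) (fun {a} ha => ?pos) ?sum)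
    (j := fun p hp => Finsupp.onFinset (Icc 1 k) (fun j => j * Multiset.count j p.parts)
      (fun j hj => ?supp)) ?hi ?hj ?li ?ri
  case pos => exact (mem_Icc.mp (mem_mult ha)).1
  case sum =>
    rw [Finset.mem_filter, mem_finsuppAntidiag] at hl
    rw [sum_mult k l hl.2, hl.1.1]
  case supp =>
    by_contra hmem
    apply hj
    have : Multiset.count j p.parts = 0 := by
      apply Multiset.count_eq_zero_of_notMem
      intro hjp
      rw [Nkf, Finset.mem_filter] at hp
      exact hmem (mem_Icc.mpr ⟨p.parts_pos hjp, hp.2 j hjp⟩)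
    show j * Multiset.count j p.parts = 0
    rw [this, mul_zero]
  case hi =>
    intro l hl
    rw [Nkf, Finset.mem_filter]
    exact ⟨Finset.mem_univ _, fun a ha => (mem_Icc.mp (mem_mult ha)).2⟩
  case hj =>
    intro p hp
    rw [Nkf, Finset.mem_filter] at hp
    rw [Finset.mem_filter, mem_finsuppAntidiag]
    refine ⟨⟨?_, Finsupp.support_onFinset_subset⟩, fun j hj => ?_⟩
    · calc ∑ j ∈ Icc 1 k, (Finsupp.onFinset (Icc 1 k)
            (fun j => j * Multiset.count j p.parts) _) j
          = ∑ j ∈ Icc 1 k, j * Multiset.count j p.parts :=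
            Finset.sum_congr rfl fun j _ => rfl
        _ = u := parts_sum_eq p hp.2
    · exact dvd_mul_right j _
  case li =>
    intro l hl
    rw [Finset.mem_filter, mem_finsuppAntidiag] at hl
    ext j
    simp only [Finsupp.onFinset_apply]
    by_cases hj : j ∈ Icc 1 k
    · rw [count_mult, if_pos hj, Nat.mul_div_cancel' (hl.2 j hj)]
    · rw [count_mult, if_neg hj, mul_zero]
      exact (Finsupp.notMem_support_iff.mp (fun hs => hj (hl.1.2 hs))).symm
  case ri =>
    intro p hp
    rw [Nkf, Finset.mem_filter] at hp
    apply Nat.Partition.ext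
    show mult k _ = p.parts
    ext a
    rw [count_mult]
    simp only [Finsupp.onFinset_apply]
    by_cases ha : a ∈ Icc 1 k
    · rw [if_pos ha, Nat.mul_div_cancel_left _ (by have := (mem_Icc.mp ha).1; omega)]
    · rw [if_neg ha]
      refine (Multiset.count_eq_zero_of_notMem fun hmem => ha ?_).symm
      exact mem_Icc.mpr ⟨p.parts_pos hmem, hp.2 a hmem⟩

section Conj

open YoungDiagram

lemma YD_card_eq (μ : YoungDiagram) : μ.card = ∑ i ∈ range (μ.colLen 0), μ.rowLen i := by
  have h1 : ∀ c ∈ μ.cells, c.1 ∈ range (μ.colLen 0) := by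
    rintro ⟨i, j⟩ hc
    rw [Finset.mem_range, ← YoungDiagram.mem_iff_lt_colLen]
    exact μ.up_left_mem le_rfl (Nat.zero_le j) ((YoungDiagram.mem_cells (i, j)).mp hc)
  rw [YoungDiagram.card, Finset.card_eq_sum_card_fiberwise h1]
  exact Finset.sum_congr rfl fun i _ => (μ.rowLen_eq_card).symm

lemma rowLens_sum (μ : YoungDiagram) : μ.rowLens.sum = μ.card := by
  rw [YD_card_eq]
  exact rfl

lemma card_transpose (μ : YoungDiagram) : μ.transpose.card = μ.card :=
  Finset.card_map _

/-- Young diagram associated to a partition. -/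
def toYD {n : ℕ} (p : Nat.Partition n) : YoungDiagram :=
  YoungDiagram.ofRowLens (p.parts.sort (· ≥ ·)) (Multiset.pairwise_sort _ _).sortedGE

lemma rowLens_toYD {n : ℕ} (p : Nat.Partition n) :
    (toYD p).rowLens = p.parts.sort (· ≥ ·) :=
  YoungDiagram.rowLens_ofRowLens_eq_self fun x hx =>
    p.parts_pos (Multiset.mem_sort _ |>.mp hx)

lemma parts_toYD {n : ℕ} (p : Nat.Partition n) :
    ((toYD p).rowLens : Multiset ℕ) = p.parts := by
  rw [rowLens_toYD]
  exact Multiset.sort_eq _ _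

lemma card_toYD {n : ℕ} (p : Nat.Partition n) : (toYD p).card = n := by
  have h1 : ((toYD p).rowLens : Multiset ℕ).sum = p.parts.sum := by rw [parts_toYD]
  have h2 : ((toYD p).rowLens : Multiset ℕ).sum = (toYD p).rowLens.sum := rfl
  rw [← rowLens_sum, ← h2, h1, p.parts_sum]

/-- The conjugate partition. -/
def conjP {u : ℕ} (p : Nat.Partition u) : Nat.Partition u where
  parts := ((toYD p).transpose.rowLens : Multiset ℕ)
  parts_pos := fun {a} ha => (toYD p).transpose.pos_of_mem_rowLens a (by exact_mod_cast ha)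
  parts_sum := by
    have h2 : ((toYD p).transpose.rowLens : Multiset ℕ).sum
        = (toYD p).transpose.rowLens.sum := rfl
    rw [h2, rowLens_sum, card_transpose, card_toYD]

lemma ofRowLens_eq_of_eq {w w' : List ℕ} (h : w = w') (hw : w.SortedGE)
    (hw' : w'.SortedGE) :
    YoungDiagram.ofRowLens w hw = YoungDiagram.ofRowLens w' hw' := by subst h; rfl

lemma sort_coe_eq {l : List ℕ} (h : l.SortedGE) :
    Multiset.sort (↑l : Multiset ℕ) (· ≥ ·) = l :=
  List.Perm.eq_of_sortedGE (Multiset.pairwise_sort _ _).sortedGE h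
    (Multiset.coe_eq_coe.mp (Multiset.sort_eq _ _))

lemma toYD_conjP {u : ℕ} (p : Nat.Partition u) : toYD (conjP p) = (toYD p).transpose :=
  (ofRowLens_eq_of_eq (sort_coe_eq ((toYD p).transpose.rowLens_sorted)) _ _).trans
    YoungDiagram.ofRowLens_to_rowLens_eq_self

lemma conjP_conjP {u : ℕ} (p : Nat.Partition u) : conjP (conjP p) = p := by
  apply Nat.Partition.ext
  show ((toYD (conjP p)).transpose.rowLens : Multiset ℕ) = p.parts
  rw [toYD_conjP, YoungDiagram.transpose_transpose, parts_toYD]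

lemma rowLens_le_iff {μ : YoungDiagram} {k : ℕ} :
    (∀ a ∈ μ.rowLens, a ≤ k) ↔ μ.rowLen 0 ≤ k := by
  constructor
  · intro h
    by_cases hc : μ.colLen 0 = 0
    · have : ¬ (0, 0) ∈ μ := by
        rw [YoungDiagram.mem_iff_lt_colLen, hc]
        omega
      rw [YoungDiagram.mem_iff_lt_rowLen] at this
      omega
    · refine h _ ?_
      rw [YoungDiagram.rowLens]
      exact List.mem_map.mpr ⟨0, List.mem_range.mpr (Nat.pos_of_ne_zero hc), rfl⟩
  · intro h a ha
    rw [YoungDiagram.rowLens, List.mem_map] at ha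
    obtain ⟨i, _, rfl⟩ := ha
    exact le_trans (μ.rowLen_anti 0 i (Nat.zero_le i)) h

lemma parts_card_eq {u : ℕ} (p : Nat.Partition u) : p.parts.card = (toYD p).colLen 0 := by
  rw [← parts_toYD p, Multiset.coe_card, YoungDiagram.length_rowLens]

lemma mem_Nkf {k u : ℕ} (p : Nat.Partition u) :
    p ∈ Nkf k u ↔ (toYD p).rowLen 0 ≤ k := by
  rw [Nkf, Finset.mem_filter]
  constructor
  · intro h
    rw [← rowLens_le_iff]
    intro a ha
    exact h.2 a (by rw [← parts_toYD p]; exact_mod_cast ha)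
  · intro h
    refine ⟨Finset.mem_univ _, fun a ha => ?_⟩
    rw [← parts_toYD p] at ha
    exact rowLens_le_iff.mpr h a (by exact_mod_cast ha)

lemma mem_Mkf {k u : ℕ} (p : Nat.Partition u) :
    p ∈ Mkf k u ↔ (toYD p).colLen 0 ≤ k := by
  rw [Mkf, Finset.mem_filter, parts_card_eq]
  simp

lemma conj (k u : ℕ) : (Mkf k u).card = (Nkf k u).card := by
  refine Finset.card_bij' (i := fun p _ => conjP p) (j := fun p _ => conjP p) ?_ ?_ ?_ ?_
  · intro p hp
    rw [mem_Nkf, toYD_conjP, YoungDiagram.rowLen_transpose]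
    exact (mem_Mkf p).mp hp
  · intro p hp
    rw [mem_Mkf, toYD_conjP, YoungDiagram.colLen_transpose]
    exact (mem_Nkf p).mp hp
  · intro p _; exact conjP_conjP p
  · intro p _; exact conjP_conjP p

end Conj

def cnt {n : ℕ} (p : Nat.Partition n) (i : ℕ) : ℕ := (p.parts.filter (fun a => i ≤ a)).card

noncomputable def dur {n : ℕ} (p : Nat.Partition n) : ℕ :=
  Nat.findGreatest (fun i => i ≤ cnt p i) n

section Durfee

variable {n : ℕ}

lemma msum_le' {s t : Multiset ℕ} (h : s ≤ t) : s.sum ≤ t.sum := by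
  obtain ⟨u, rfl⟩ := Multiset.le_iff_exists_add.mp h
  rw [Multiset.sum_add]
  exact Nat.le_add_right _ _

lemma cnt_le_cnt (p : Nat.Partition n) {i j : ℕ} (h : i ≤ j) : cnt p j ≤ cnt p i := by
  refine Multiset.card_le_card (Multiset.le_iff_count.mpr fun a => ?_)
  rw [Multiset.count_filter, Multiset.count_filter]
  split_ifs with h1 h2
  · exact le_rfl
  · exact absurd (le_trans h h1) h2
  · exact Nat.zero_le _
  · exact Nat.zero_le _

lemma cnt_le_card (p : Nat.Partition n) (i : ℕ) : cnt p i ≤ Multiset.card p.parts :=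
  Multiset.card_le_card (Multiset.filter_le _ _)

lemma card_parts_le (p : Nat.Partition n) : Multiset.card p.parts ≤ n := by
  have h1 : Multiset.card p.parts • 1 ≤ p.parts.sum :=
    Multiset.card_nsmul_le_sum fun x hx => p.parts_pos hx
  rw [smul_eq_mul, mul_one, p.parts_sum] at h1
  exact h1

lemma sq_le_of_le_cnt (p : Nat.Partition n) {i : ℕ} (h : i ≤ cnt p i) : i * i ≤ n := by
  have h2 : cnt p i • i ≤ (p.parts.filter (fun a => i ≤ a)).sum :=
    Multiset.card_nsmul_le_sum fun x hx => Multiset.of_mem_filter hx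
  have h3 : (p.parts.filter (fun a => i ≤ a)).sum ≤ p.parts.sum :=
    msum_le' (Multiset.filter_le _ _)
  rw [smul_eq_mul] at h2
  calc i * i ≤ cnt p i * i := Nat.mul_le_mul_right i h
    _ ≤ p.parts.sum := le_trans h2 h3
    _ = n := p.parts_sum

lemma dur_eq_iff {p : Nat.Partition n} {k : ℕ} :
    dur p = k ↔ (k ≤ cnt p k ∧ cnt p (k + 1) ≤ k) := by
  constructor
  · rintro rfl
    refine ⟨Nat.findGreatest_spec (P := fun i => i ≤ cnt p i) (Nat.zero_le n)
      (Nat.zero_le _), ?_⟩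
    by_contra hc
    push_neg at hc
    have hP : dur p + 1 ≤ cnt p (dur p + 1) := hc
    have hb : dur p + 1 ≤ n :=
      le_trans hP (le_trans (cnt_le_card p _) (card_parts_le p))
    exact Nat.findGreatest_is_greatest (P := fun i => i ≤ cnt p i)
      (Nat.lt_succ_self _) hb hP
  · rintro ⟨h1, h2⟩
    have hkn : k ≤ n := le_trans h1 (le_trans (cnt_le_card p _) (card_parts_le p))
    rw [dur, Nat.findGreatest_eq_iff]
    refine ⟨hkn, fun _ => h1, fun m hm hmn hP => ?_⟩
    have : cnt p m ≤ cnt p (k + 1) := cnt_le_cnt p (by omega)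
    omega

lemma cnt_split (k : ℕ) (s : Multiset ℕ) :
    Multiset.card (s.filter (fun a => k ≤ a)) =
      Multiset.card (s.filter (fun a => k + 1 ≤ a)) + s.count k := by
  induction s using Multiset.induction_on with
  | empty => simp
  | cons a s ih =>
    rw [Multiset.filter_cons, Multiset.filter_cons, Multiset.count_cons]
    by_cases h1 : k + 1 ≤ a
    · rw [if_pos (by omega : k ≤ a), if_pos h1, if_neg (by omega : ¬ k = a)]
      simp only [Multiset.card_add, Multiset.card_singleton]
      omega
    · by_cases h2 : k = a
      · rw [if_pos (by omega : k ≤ a), if_neg h1, if_pos h2]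
        simp only [Multiset.card_add, Multiset.card_singleton, Multiset.card_zero, zero_add]
        omega
      · rw [if_neg (by omega : ¬ k ≤ a), if_neg h1, if_neg h2]
        simp only [Multiset.card_add, Multiset.card_zero, zero_add]
        omega

lemma sum_map_sub_of_le {c : ℕ} {s : Multiset ℕ} (h : ∀ a ∈ s, c ≤ a) :
    (s.map (fun a => a - c)).sum + c * Multiset.card s = s.sum := by
  induction s using Multiset.induction_on with
  | empty => simp
  | cons a s ih =>
    simp only [Multiset.map_cons, Multiset.sum_cons, Multiset.card_cons]
    have ha := h a (Multiset.mem_cons_self a s)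
    have hih := ih fun b hb => h b (Multiset.mem_cons_of_mem hb)
    rw [Nat.mul_succ]
    set m := c * Multiset.card s with hm
    omega

lemma sum_map_add (c : ℕ) (s : Multiset ℕ) :
    (s.map (fun a => a + c)).sum = s.sum + c * Multiset.card s := by
  induction s using Multiset.induction_on with
  | empty => simp
  | cons a s ih =>
    simp only [Multiset.map_cons, Multiset.sum_cons, Multiset.card_cons]
    rw [Nat.mul_succ]
    set m := c * Multiset.card s with hm
    omega

/-- rows strictly to the right of / through the Durfee square -/
def hiM {n : ℕ} (k : ℕ) (p : Nat.Partition n) : Multiset ℕ :=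
  p.parts.filter (fun a => k + 1 ≤ a)

def loM {n : ℕ} (k : ℕ) (p : Nat.Partition n) : Multiset ℕ :=
  p.parts.filter (fun a => ¬ (k + 1 ≤ a))

def P1M {n : ℕ} (k : ℕ) (p : Nat.Partition n) : Multiset ℕ :=
  (hiM k p).map (fun a => a - k)

def P2M {n : ℕ} (k : ℕ) (p : Nat.Partition n) : Multiset ℕ :=
  loM k p - Multiset.replicate (k - cnt p (k + 1)) k

lemma card_hiM (k : ℕ) (p : Nat.Partition n) : Multiset.card (hiM k p) = cnt p (k + 1) := rfl

lemma replicate_le_loM (k : ℕ) {p : Nat.Partition n} (h : dur p = k) :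
    Multiset.replicate (k - cnt p (k + 1)) k ≤ loM k p := by
  obtain ⟨h1, h2⟩ := dur_eq_iff.mp h
  rw [← Multiset.le_count_iff_replicate_le, loM, Multiset.count_filter,
    if_pos (by omega : ¬ (k + 1 ≤ k))]
  have hs := cnt_split k p.parts
  have : cnt p k = Multiset.card (p.parts.filter (fun a => k + 1 ≤ a)) + p.parts.count k := hs
  have hcc : cnt p (k + 1) = Multiset.card (p.parts.filter (fun a => k + 1 ≤ a)) := rfl
  omega

lemma hi_add_lo (k : ℕ) (p : Nat.Partition n) : hiM k p + loM k p = p.parts :=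
  Multiset.filter_add_not _ _

lemma UV_add {k : ℕ} (p : Nat.Partition n) (h : dur p = k) :
    (P1M k p).sum + (P2M k p).sum + k * k = n := by
  obtain ⟨h1, h2⟩ := dur_eq_iff.mp h
  set t := cnt p (k + 1) with ht
  have hU : (P1M k p).sum + k * t = (hiM k p).sum := by
    have hkey := sum_map_sub_of_le (c := k) (s := hiM k p) (fun a ha => by
      have := Multiset.of_mem_filter ha; omega)
    rw [P1M, ht, ← card_hiM k p]
    exact hkey
  have hV : (P2M k p).sum + (k - t) * k = (loM k p).sum := by
    have hrep := replicate_le_loM k h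
    have := congrArg Multiset.sum (tsub_add_cancel_of_le hrep)
    rwa [Multiset.sum_add, Multiset.sum_replicate, smul_eq_mul] at this
  have hT : (hiM k p).sum + (loM k p).sum = n := by
    have := congrArg Multiset.sum (hi_add_lo k p)
    rwa [Multiset.sum_add, p.parts_sum] at this
  have hmul : k * t + (k - t) * k = k * k := by
    rw [mul_comm k t, ← add_mul, Nat.add_sub_cancel' h2]
  linarith

/-- the multiset obtained by gluing a `k × k` square, a partition `s1` placed to its
right (row lengths `s1`), and a partition `s2` with parts `≤ k` below it. -/
def glueM (k : ℕ) (s1 s2 : Multiset ℕ) : Multiset ℕ :=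
  s1.map (fun a => a + k) + Multiset.replicate (k - Multiset.card s1) k + s2

lemma msum_le {s t : Multiset ℕ} (h : s ≤ t) : s.sum ≤ t.sum := by
  obtain ⟨u, rfl⟩ := Multiset.le_iff_exists_add.mp h
  rw [Multiset.sum_add]
  exact Nat.le_add_right _ _

section Glue

variable {k : ℕ} {s1 s2 : Multiset ℕ}

lemma glue_filter_hi (hs1 : ∀ a ∈ s1, 0 < a) (hs2 : ∀ a ∈ s2, a ≤ k) :
    (glueM k s1 s2).filter (fun a => k + 1 ≤ a) = s1.map (fun a => a + k) := by
  have e1 : (s1.map (fun a => a + k)).filter (fun a => k + 1 ≤ a) = s1.map (fun a => a + k) :=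
    Multiset.filter_eq_self.mpr fun a ha => by
      obtain ⟨b, hb, rfl⟩ := Multiset.mem_map.mp ha
      have := hs1 b hb; omega
  have e2 : (Multiset.replicate (k - Multiset.card s1) k).filter (fun a => k + 1 ≤ a) = 0 :=
    Multiset.filter_eq_nil.mpr fun a ha => by
      have := Multiset.eq_of_mem_replicate ha; omega
  have e3 : s2.filter (fun a => k + 1 ≤ a) = 0 :=
    Multiset.filter_eq_nil.mpr fun a ha => by have := hs2 a ha; omega
  rw [glueM, Multiset.filter_add, Multiset.filter_add, e1, e2, e3, add_zero, add_zero]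

lemma glue_filter_lo (hs1 : ∀ a ∈ s1, 0 < a) (hs2 : ∀ a ∈ s2, a ≤ k) :
    (glueM k s1 s2).filter (fun a => ¬ (k + 1 ≤ a))
      = Multiset.replicate (k - Multiset.card s1) k + s2 := by
  have e1 : (s1.map (fun a => a + k)).filter (fun a => ¬ (k + 1 ≤ a)) = 0 :=
    Multiset.filter_eq_nil.mpr fun a ha => by
      obtain ⟨b, hb, rfl⟩ := Multiset.mem_map.mp ha
      have := hs1 b hb; omega
  have e2 : (Multiset.replicate (k - Multiset.card s1) k).filter (fun a => ¬ (k + 1 ≤ a))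
      = Multiset.replicate (k - Multiset.card s1) k :=
    Multiset.filter_eq_self.mpr fun a ha => by
      have := Multiset.eq_of_mem_replicate ha; omega
  have e3 : s2.filter (fun a => ¬ (k + 1 ≤ a)) = s2 :=
    Multiset.filter_eq_self.mpr fun a ha => by have := hs2 a ha; omega
  rw [glueM, Multiset.filter_add, Multiset.filter_add, e1, e2, e3, zero_add]

lemma glue_sum (hc : Multiset.card s1 ≤ k) :
    (glueM k s1 s2).sum = s1.sum + s2.sum + k * k := by
  rw [glueM, Multiset.sum_add, Multiset.sum_add, sum_map_add, Multiset.sum_replicate,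
    smul_eq_mul]
  have hmul : k * Multiset.card s1 + (k - Multiset.card s1) * k = k * k := by
    rw [mul_comm k, ← add_mul, Nat.add_sub_cancel' hc]
  linarith

lemma glue_mem_pos (hs1 : ∀ a ∈ s1, 0 < a) (hs2 : ∀ a ∈ s2, 0 < a) {a : ℕ}
    (ha : a ∈ glueM k s1 s2) : 0 < a := by
  rw [glueM, Multiset.mem_add, Multiset.mem_add] at ha
  rcases ha with (h | h) | h
  · obtain ⟨b, hb, rfl⟩ := Multiset.mem_map.mp h
    have := hs1 b hb; omega
  · obtain ⟨hne, rfl⟩ := Multiset.mem_replicate.mp h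
    omega
  · exact hs2 a h

lemma glue_cnt_ge (hc : Multiset.card s1 ≤ k) :
    k ≤ Multiset.card ((glueM k s1 s2).filter (fun a => k ≤ a)) := by
  have e1 : (s1.map (fun a => a + k)).filter (fun a => k ≤ a) = s1.map (fun a => a + k) :=
    Multiset.filter_eq_self.mpr fun a ha => by
      obtain ⟨b, hb, rfl⟩ := Multiset.mem_map.mp ha; omega
  have e2 : (Multiset.replicate (k - Multiset.card s1) k).filter (fun a => k ≤ a)
      = Multiset.replicate (k - Multiset.card s1) k :=
    Multiset.filter_eq_self.mpr fun a ha => by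
      have := Multiset.eq_of_mem_replicate ha; omega
  rw [glueM, Multiset.filter_add, Multiset.filter_add, e1, e2, Multiset.card_add,
    Multiset.card_add, Multiset.card_map, Multiset.card_replicate]
  omega

end Glue

/-- glued partition -/
def gluePart (n k : ℕ) {u v : ℕ} (P1 : Nat.Partition u) (P2 : Nat.Partition v)
    (hsum : u + v + k * k = n) (hc : Multiset.card P1.parts ≤ k)
    (hs2 : ∀ a ∈ P2.parts, a ≤ k) : Nat.Partition n where
  parts := glueM k P1.parts P2.parts
  parts_pos := fun {a} ha => glue_mem_pos (fun b hb => P1.parts_pos hb)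
    (fun b hb => P2.parts_pos hb) ha
  parts_sum := by rw [glue_sum hc, P1.parts_sum, P2.parts_sum, hsum]

lemma dur_gluePart (n k : ℕ) {u v : ℕ} (P1 : Nat.Partition u) (P2 : Nat.Partition v)
    (hsum : u + v + k * k = n) (hc : Multiset.card P1.parts ≤ k)
    (hs2 : ∀ a ∈ P2.parts, a ≤ k) :
    dur (gluePart n k P1 P2 hsum hc hs2) = k := by
  refine dur_eq_iff.mpr ⟨?_, ?_⟩
  · exact glue_cnt_ge hc
  · show Multiset.card ((glueM k P1.parts P2.parts).filter (fun a => k + 1 ≤ a)) ≤ k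
    rw [glue_filter_hi (fun b hb => P1.parts_pos hb) hs2, Multiset.card_map]
    exact hc

lemma P1M_gluePart (n k : ℕ) {u v : ℕ} (P1 : Nat.Partition u) (P2 : Nat.Partition v)
    (hsum : u + v + k * k = n) (hc : Multiset.card P1.parts ≤ k)
    (hs2 : ∀ a ∈ P2.parts, a ≤ k) :
    P1M k (gluePart n k P1 P2 hsum hc hs2) = P1.parts := by
  show ((glueM k P1.parts P2.parts).filter (fun a => k + 1 ≤ a)).map (fun a => a - k)
      = P1.parts
  rw [glue_filter_hi (fun b hb => P1.parts_pos hb) hs2, Multiset.map_map]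
  have : P1.parts.map ((fun a => a - k) ∘ (fun a => a + k)) = P1.parts.map id :=
    Multiset.map_congr rfl fun a _ => by
      show a + k - k = a
      omega
  rw [this, Multiset.map_id]

lemma P2M_gluePart (n k : ℕ) {u v : ℕ} (P1 : Nat.Partition u) (P2 : Nat.Partition v)
    (hsum : u + v + k * k = n) (hc : Multiset.card P1.parts ≤ k)
    (hs2 : ∀ a ∈ P2.parts, a ≤ k) :
    P2M k (gluePart n k P1 P2 hsum hc hs2) = P2.parts := by
  have hcnt : cnt (gluePart n k P1 P2 hsum hc hs2) (k + 1) = Multiset.card P1.parts := by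
    show Multiset.card ((glueM k P1.parts P2.parts).filter (fun a => k + 1 ≤ a)) = _
    rw [glue_filter_hi (fun b hb => P1.parts_pos hb) hs2, Multiset.card_map]
  show (glueM k P1.parts P2.parts).filter (fun a => ¬ (k + 1 ≤ a))
      - Multiset.replicate (k - cnt (gluePart n k P1 P2 hsum hc hs2) (k + 1)) k = P2.parts
  rw [hcnt, glue_filter_lo (fun b hb => P1.parts_pos hb) hs2, add_tsub_cancel_left]

lemma glue_unglue {k : ℕ} (p : Nat.Partition n) (h : dur p = k) :
    glueM k (P1M k p) (P2M k p) = p.parts := by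
  have hmm : (P1M k p).map (fun a => a + k) = hiM k p := by
    rw [P1M, Multiset.map_map]
    have : (hiM k p).map ((fun a => a + k) ∘ (fun a => a - k)) = (hiM k p).map id :=
      Multiset.map_congr rfl fun a ha => by
        have := Multiset.of_mem_filter ha
        show a - k + k = a
        omega
    rw [this, Multiset.map_id]
  have hcard : Multiset.card (P1M k p) = cnt p (k + 1) := by
    rw [P1M, Multiset.card_map, card_hiM]
  rw [glueM, hmm, hcard, P2M, add_assoc, add_comm (Multiset.replicate _ _),
    tsub_add_cancel_of_le (replicate_le_loM k h), hi_add_lo]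

lemma P1M_card_le {k : ℕ} (p : Nat.Partition n) (h : dur p = k) :
    Multiset.card (P1M k p) ≤ k := by
  rw [P1M, Multiset.card_map, card_hiM]
  exact (dur_eq_iff.mp h).2

lemma P1M_pos {k : ℕ} (p : Nat.Partition n) {a : ℕ} (ha : a ∈ P1M k p) : 0 < a := by
  obtain ⟨b, hb, rfl⟩ := Multiset.mem_map.mp ha
  have := Multiset.of_mem_filter hb
  omega

lemma P2M_mem_lo {k : ℕ} (p : Nat.Partition n) {a : ℕ} (ha : a ∈ P2M k p) : a ∈ loM k p :=
  Multiset.mem_of_le (tsub_le_self) ha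

lemma P2M_pos {k : ℕ} (p : Nat.Partition n) {a : ℕ} (ha : a ∈ P2M k p) : 0 < a :=
  p.parts_pos (Multiset.mem_of_le (Multiset.filter_le _ _) (P2M_mem_lo p ha))

lemma P2M_le {k : ℕ} (p : Nat.Partition n) {a : ℕ} (ha : a ∈ P2M k p) : a ≤ k := by
  have := Multiset.of_mem_filter (P2M_mem_lo p ha)
  omega

lemma fiber_card (n k : ℕ) (hk : k ^ 2 ≤ n) :
    ((Finset.univ : Finset (Nat.Partition n)).filter (fun p => dur p = k)).card
      = ∑ uv ∈ antidiagonal (n - k ^ 2), (Mkf k uv.1).card * (Nkf k uv.2).card := by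
  have hk2 : k ^ 2 = k * k := pow_two k
  have hmem : ∀ p ∈ (Finset.univ : Finset (Nat.Partition n)).filter (fun p => dur p = k),
      ((P1M k p).sum, (P2M k p).sum) ∈ antidiagonal (n - k ^ 2) := by
    intro p hp
    rw [Finset.mem_filter] at hp
    have := UV_add p hp.2
    rw [Finset.HasAntidiagonal.mem_antidiagonal]
    omega
  rw [Finset.card_eq_sum_card_fiberwise hmem]
  refine Finset.sum_congr rfl fun uv huv => ?_
  rw [Finset.HasAntidiagonal.mem_antidiagonal] at huv
  have hn : uv.1 + uv.2 + k * k = n := by omega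
  rw [← Finset.card_product]
  refine Finset.card_bij'
    (i := fun p hp =>
      (⟨P1M k p, fun {a} ha => P1M_pos p ha, by
          rw [Finset.mem_filter] at hp
          exact congrArg Prod.fst hp.2⟩,
       ⟨P2M k p, fun {a} ha => P2M_pos p ha, by
          rw [Finset.mem_filter] at hp
          exact congrArg Prod.snd hp.2⟩))
    (j := fun x hx => gluePart n k x.1 x.2 hn
      (by rw [Finset.mem_product, Mkf, Finset.mem_filter] at hx; exact hx.1.2)
      (by rw [Finset.mem_product, Nkf, Finset.mem_filter] at hx
          exact fun a ha => hx.2.2 a ha))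
    ?_ ?_ ?_ ?_
  · intro p hp
    rw [Finset.mem_filter, Finset.mem_filter] at hp
    rw [Finset.mem_product]
    constructor
    · rw [Mkf, Finset.mem_filter]
      exact ⟨Finset.mem_univ _, P1M_card_le p hp.1.2⟩
    · rw [Nkf, Finset.mem_filter]
      exact ⟨Finset.mem_univ _, fun a ha => P2M_le p ha⟩
  · intro x hx
    rw [Finset.mem_filter, Finset.mem_filter]
    refine ⟨⟨Finset.mem_univ _, dur_gluePart n k x.1 x.2 hn _ _⟩, ?_⟩
    have e1 := P1M_gluePart n k x.1 x.2 hn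
      (by rw [Finset.mem_product, Mkf, Finset.mem_filter] at hx; exact hx.1.2)
      (by rw [Finset.mem_product, Nkf, Finset.mem_filter] at hx
          exact fun a ha => hx.2.2 a ha)
    have e2 := P2M_gluePart n k x.1 x.2 hn
      (by rw [Finset.mem_product, Mkf, Finset.mem_filter] at hx; exact hx.1.2)
      (by rw [Finset.mem_product, Nkf, Finset.mem_filter] at hx
          exact fun a ha => hx.2.2 a ha)
    rw [e1, e2, x.1.parts_sum, x.2.parts_sum]
  · intro p hp
    rw [Finset.mem_filter, Finset.mem_filter] at hp
    apply Nat.Partition.ext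
    show glueM k (P1M k p) (P2M k p) = p.parts
    exact glue_unglue p hp.1.2
  · intro x hx
    have hc := (by rw [Finset.mem_product, Mkf, Finset.mem_filter] at hx; exact hx.1.2 :
      Multiset.card x.1.parts ≤ k)
    have hs2 := (by rw [Finset.mem_product, Nkf, Finset.mem_filter] at hx
                    exact fun a ha => hx.2.2 a ha : ∀ a ∈ x.2.parts, a ≤ k)
    have e1 := P1M_gluePart n k x.1 x.2 hn hc hs2
    have e2 := P2M_gluePart n k x.1 x.2 hn hc hs2
    refine Prod.ext ?_ ?_
    · apply Nat.Partition.ext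
      exact e1
    · apply Nat.Partition.ext
      exact e2

lemma dur_le_bound (p : Nat.Partition n) : dur p ≤ n := Nat.findGreatest_le n

lemma durfee (n : ℕ) : Fintype.card (Nat.Partition n) =
    ∑ k ∈ range (n+1), if k^2 ≤ n then
      ∑ uv ∈ antidiagonal (n - k^2), (Mkf k uv.1).card * (Nkf k uv.2).card else 0 := by
  rw [← Finset.card_univ]
  rw [Finset.card_eq_sum_card_fiberwise (f := dur) (t := range (n + 1))
    (fun p _ => Finset.mem_range.mpr (Nat.lt_succ_of_le (dur_le_bound p)))]
  refine Finset.sum_congr rfl fun k hk => ?_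
  split_ifs with hksq
  · exact fiber_card n k hksq
  · rw [Finset.card_eq_zero]
    refine Finset.filter_eq_empty_iff.mpr fun {p} _ hdur => ?_
    have h1 := (dur_eq_iff.mp hdur).1
    have := sq_le_of_le_cnt p h1
    rw [pow_two] at hksq
    exact hksq this

end Durfee


lemma coeff_term' (k n : ℕ) : coeff (R := ℤ) n ((∏ j ∈ Icc 1 k, G j)^2 * X^(k^2)) =
    if k^2 ≤ n then
      ((∑ uv ∈ antidiagonal (n - k^2), (Nkf k uv.1).card * (Nkf k uv.2).card : ℕ) : ℤ) else 0 := by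
  rw [coeff_mul_X_pow']
  split_ifs with h
  · rw [pow_two (∏ j ∈ Icc 1 k, G j), coeff_mul]
    push_cast
    refine Finset.sum_congr rfl fun uv _ => ?_
    rw [coeff_prod_G, coeff_prod_G]
  · rfl

end MockAux

open PowerSeries

/-- The partition generating function `Σ_{n≥0} p(n) qⁿ ∈ ℤ⟦q⟧`. -/
noncomputable def partitionGF : PowerSeries ℤ :=
  PowerSeries.mk fun n => (Fintype.card (Nat.Partition n) : ℤ)

/-- The inverse `(1 + q^j)⁻¹ ∈ ℤ⟦q⟧` (for `j ≥ 1` the constant term is `1`, a unit). -/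
noncomputable def onePlusXInv (j : ℕ) : PowerSeries ℤ :=
  PowerSeries.invOfUnit (1 + PowerSeries.X ^ j) 1

/-- The `k`-th summand `q^{k²} ∏_{j=1}^{k} (1+q^j)^{-2}` of the mock theta function
`f(q)`; the `k = 0` summand is the leading term `1`. -/
noncomputable def mockThetaTerm (k : ℕ) : PowerSeries ℤ :=
  PowerSeries.X ^ (k ^ 2) * ∏ j ∈ Finset.Icc 1 k, (onePlusXInv j) ^ 2

/-- Ramanujan's third order mock theta function
`f(q) = 1 + Σ_{k≥1} q^{k²} ∏_{j=1}^{k}(1+q^j)^{-2} ∈ ℤ⟦q⟧`.  The sum converges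
q-adically since the `k`-th summand lies in `q^{k²}·ℤ⟦q⟧`, so the `n`-th coefficient
is the (finite) sum of the `n`-th coefficients of the summands with `k ≤ n`. -/
noncomputable def mockThetaF : PowerSeries ℤ :=
  PowerSeries.mk fun n =>
    ∑ k ∈ Finset.range (n + 1), (PowerSeries.coeff (R := ℤ) n) (mockThetaTerm k)

namespace MockAux

noncomputable def φ : PowerSeries ℤ →+* PowerSeries (ZMod 4) :=
  PowerSeries.map (Int.castRingHom (ZMod 4))

lemma inv_sq_eq (j : ℕ) (hj : 1 ≤ j) : φ (onePlusXInv j) ^ 2 = φ (G j) ^ 2 := by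
  have hj0 : j ≠ 0 := by omega
  have hc : constantCoeff (R := ℤ) (1 + X ^ j) = ((1 : ℤˣ) : ℤ) := by
    simp [zero_pow hj0]
  have h1 : (1 + X ^ j : PowerSeries ℤ) * onePlusXInv j = 1 :=
    PowerSeries.mul_invOfUnit _ _ hc
  have h1' : ((1 : PowerSeries (ZMod 4)) + X ^ j) * φ (onePlusXInv j) = 1 := by
    have h := congrArg φ h1
    simpa only [φ, map_mul, map_add, map_pow, PowerSeries.map_X, map_one] using h
  have h2 : ((1 : PowerSeries (ZMod 4)) - X ^ j) * φ (G j) = 1 := by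
    have h := congrArg φ (one_sub_mul_G hj)
    simpa only [φ, map_mul, map_sub, map_pow, PowerSeries.map_X, map_one] using h
  have hsq : ((1 : PowerSeries (ZMod 4)) + X ^ j) ^ 2 = (1 - X ^ j) ^ 2 := by
    have h4 : (4 : PowerSeries (ZMod 4)) = 0 := by
      rw [← map_ofNat (C (R := ZMod 4)) 4, show (4 : ZMod 4) = 0 from rfl, map_zero]
    linear_combination (X : PowerSeries (ZMod 4)) ^ j * h4
  calc φ (onePlusXInv j) ^ 2
      = φ (onePlusXInv j) ^ 2 * (((1 - X ^ j)) ^ 2 * φ (G j) ^ 2) := by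
        rw [← mul_pow, h2]; ring
    _ = (((1 + X ^ j)) ^ 2 * φ (onePlusXInv j) ^ 2) * φ (G j) ^ 2 := by rw [hsq]; ring
    _ = φ (G j) ^ 2 := by rw [← mul_pow, h1']; ring

lemma map_term (k : ℕ) :
    φ (mockThetaTerm k) = φ ((∏ j ∈ Icc 1 k, G j) ^ 2 * X ^ (k ^ 2)) := by
  rw [mockThetaTerm, map_mul, map_mul, mul_comm (φ (X ^ k ^ 2))]
  congr 1
  calc φ (∏ j ∈ Icc 1 k, onePlusXInv j ^ 2)
      = ∏ j ∈ Icc 1 k, φ (onePlusXInv j ^ 2) := map_prod φ _ _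
    _ = ∏ j ∈ Icc 1 k, φ (G j) ^ 2 := Finset.prod_congr rfl fun j hj => by
          rw [map_pow]; exact inv_sq_eq j (mem_Icc.mp hj).1
    _ = φ ((∏ j ∈ Icc 1 k, G j) ^ 2) := by
          rw [map_pow, map_prod, Finset.prod_pow]

end MockAux

theorem partition_congruent_mockTheta_mod_four :
    ∀ n : ℕ, (PowerSeries.coeff (R := ℤ) n) partitionGF ≡ (PowerSeries.coeff (R := ℤ) n) mockThetaF [ZMOD 4] := by
  intro n
  suffices h : ((PowerSeries.coeff (R := ℤ) n partitionGF : ℤ) : ZMod 4)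
      = ((PowerSeries.coeff (R := ℤ) n mockThetaF : ℤ) : ZMod 4) by
    have := (ZMod.intCast_eq_intCast_iff _ _ _).mp h
    exact_mod_cast this
  have hL : ((PowerSeries.coeff (R := ℤ) n partitionGF : ℤ) : ZMod 4)
      = ((Fintype.card (Nat.Partition n) : ℕ) : ZMod 4) := by
    rw [partitionGF, PowerSeries.coeff_mk]; push_cast; ring
  have hR : ∀ k : ℕ, ((PowerSeries.coeff (R := ℤ) n (mockThetaTerm k) : ℤ) : ZMod 4)
      = (((if k ^ 2 ≤ n then
        ∑ uv ∈ Finset.HasAntidiagonal.antidiagonal (n - k ^ 2),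
          (MockAux.Nkf k uv.1).card * (MockAux.Nkf k uv.2).card
        else 0 : ℕ)) : ZMod 4) := by
    intro k
    have h1 : ((PowerSeries.coeff (R := ℤ) n (mockThetaTerm k) : ℤ) : ZMod 4)
        = PowerSeries.coeff (R := ZMod 4) n (MockAux.φ (mockThetaTerm k)) := by
      rw [MockAux.φ, PowerSeries.coeff_map]; rfl
    rw [h1, MockAux.map_term, MockAux.φ, PowerSeries.coeff_map, MockAux.coeff_term',
      apply_ite (Int.castRingHom (ZMod 4)), map_natCast, map_zero, Nat.cast_ite, Nat.cast_zero]
  rw [hL, MockAux.durfee n, mockThetaF, PowerSeries.coeff_mk, Int.cast_sum]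
  rw [Finset.sum_congr rfl fun k _ => hR k]
  rw [← Nat.cast_sum]
  refine congrArg (Nat.cast : ℕ → ZMod 4) (Finset.sum_congr rfl fun k _ => ?_)
  split_ifs with h
  · exact Finset.sum_congr rfl fun uv _ => by rw [MockAux.conj]
  · rfl
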